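/- Let C be the cluster category of a hereditary algebra H and T a tilting object with Γ = End_C(T)^op. Let M be a non-projective indecomposable Γ-module corresponding to an object of C/add(τT), and let A → B → C₀ → A[1] be the AR-triangle in C ending at the corresponding object C₀. Then the induced sequence 0 → Ã → B̃ → M → 0 in mod Γ is an almost split (AR) sequence; in particular Ã ≅ τ_Γ M. -/

import Mathlib

open CategoryTheory Limits Pretriangulated Opposite

universe v u

/-- `X ∈ add T`: `X` is a direct summand of a finite direct sum of copies of `T`. -/
def memAddC {C : Type u} [Category.{v} C] [Preadditive C] [HasFiniteBiproducts C]
    (T X : C) : Prop :=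
  ∃ (n : ℕ) (i : X ⟶ ⨁ (fun _ : Fin n => T)) (p : ⨁ (fun _ : Fin n => T) ⟶ X),
    i ≫ p = 𝟙 X

/-- `T` is a tilting object: `Hom_C(T, X[1]) = 0` if and only if `X ∈ add T`. -/
def IsTiltingObject {C : Type u} [Category.{v} C] [Preadditive C] [HasFiniteBiproducts C]
    [HasShift C ℤ] (T : C) : Prop :=
  ∀ X : C, (∀ f : T ⟶ X⟦(1 : ℤ)⟧, f = 0) ↔ memAddC T X

/-- A morphism factors through an object of `add N`. -/
def factorsThroughAdd {C : Type u} [Category.{v} C] [Preadditive C] [HasFiniteBiproducts C]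
    (N : C) {X Y : C} (f : X ⟶ Y) : Prop :=
  ∃ (Z : C) (_ : memAddC N Z) (g : X ⟶ Z) (h : Z ⟶ Y), g ≫ h = f

/-- An object of an additive category is indecomposable if it is nonzero and its only
idempotent endomorphisms are `0` and the identity. -/
def IndecC {C : Type u} [Category.{v} C] [Preadditive C] [HasZeroObject C] (X : C) : Prop :=
  (¬ IsZero X) ∧ ∀ e : X ⟶ X, e ≫ e = e → e = 0 ∨ e = 𝟙 X

/-- Old (Dec 2024) left action of `End X` (for `X : Cᵒᵖ`) on `unop X ⟶ Y`. -/
instance endOpMulActionLeftOld {C : Type u} [Category.{v} C] {X : Cᵒᵖ} {Y : C} :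
    MulAction (End X) (unop X ⟶ Y) where
  smul r f := r.unop ≫ f
  one_smul := Category.id_comp
  mul_smul _ _ _ := Category.assoc _ _ _

/-- Old (Dec 2024) `Module (End X) (unop X ⟶ Y)` instance. -/
instance endOpModuleLeftOld {C : Type u} [Category.{v} C] [Preadditive C] {X : Cᵒᵖ} {Y : C} :
    Module (End X) (unop X ⟶ Y) where
  smul_add _ _ _ := Preadditive.comp_add _ _ _ _ _ _
  smul_zero _ := Limits.comp_zero
  add_smul _ _ _ := Preadditive.add_comp _ _ _ _ _ _
  zero_smul _ := Limits.zero_comp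

/-- The old (Dec 2024) `preadditiveCoyonedaObj`: for `X : Cᵒᵖ`, the functor
`C ⥤ ModuleCat (End X)`, `Y ↦ (unop X ⟶ Y)`. -/
def preadditiveCoyonedaObjOld {C : Type u} [Category.{v} C] [Preadditive C] (X : Cᵒᵖ) :
    C ⥤ ModuleCat.{v} (End X) where
  obj Y := ModuleCat.of _ (unop X ⟶ Y)
  map f := ModuleCat.ofHom
    { toFun := fun g => g ≫ f
      map_add' := fun _ _ => Preadditive.add_comp _ _ _ _ _ _
      map_smul' := fun r g => by
        first
          | exact (Category.assoc r.unop g f).symm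
          | exact Category.assoc r.unop g f }

section Aux

variable {C : Type u} [Category.{v} C] [Preadditive C] [HasFiniteBiproducts C]

lemma memAddC_of_summand {N X Y : C} (s : X ⟶ Y) (h : Y ⟶ X) (hs : s ≫ h = 𝟙 X)
    (hY : memAddC N Y) : memAddC N X := by
  obtain ⟨n, i, p, hip⟩ := hY
  exact ⟨n, s ≫ i, p ≫ h, by
    rw [Category.assoc, ← Category.assoc i, hip, Category.id_comp, hs]⟩

lemma memAddC_self_of_retract {N X : C} (s : X ⟶ N) (h : N ⟶ X) (hs : s ≫ h = 𝟙 X) :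
    memAddC N X :=
  ⟨1, s ≫ biproduct.ι (fun _ : Fin 1 => N) 0, biproduct.π (fun _ : Fin 1 => N) 0 ≫ h, by
    rw [Category.assoc, ← Category.assoc (biproduct.ι _ 0), biproduct.ι_π_self,
      Category.id_comp, hs]⟩

end Aux

/-- Let `C` be the cluster category of a hereditary algebra, `T` a tilting object,
`Γ = End_C(T)ᵒᵖ`, and `G = Hom_C(T,−)`, which induces the equivalence `C/add(τT) ≃ mod Γ` of
the main theorem.  Let `C₀` be an indecomposable object of `C` not in `add(τT)` whose image
`G(C₀)` is a non-projective indecomposable `Γ`-module (i.e. `C₀ ∉ add T`), and let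
`A → B → C₀ → A[1]` be the AR-triangle in `C` ending at `C₀` (so `A ≅ τC₀`, the triangle does
not split, `A → B` is left almost split and `B → C₀` is right almost split).  Then the induced
sequence `0 → G(A) → G(B) → G(C₀) → 0` in `mod Γ` is an almost split (AR) sequence; in
particular `G(A) ≅ τ_Γ G(C₀)`. -/
theorem stmt15 {C : Type u} [Category.{v} C] [Preadditive C] [HasZeroObject C]
    [HasShift C ℤ] [∀ n : ℤ, (shiftFunctor C n).Additive] [Pretriangulated C]
    [HasFiniteBiproducts C]
    (k : Type v) [Field k] [Linear k C]
    (hfin : ∀ X Y : C, FiniteDimensional k (X ⟶ Y))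
    (τ : C ⥤ C) [τ.Additive] [τ.IsEquivalence] (hτiso : τ ≅ shiftFunctor C (1 : ℤ))
    (T : C) (hT : IsTiltingObject T)
    (G : C ⥤ ModuleCat.{v} (End (op T))) (hG : G = preadditiveCoyonedaObjOld (op T))
    (hfull : ∀ (X Y : C) (φ : G.obj X ⟶ G.obj Y), ∃ ψ : X ⟶ Y, G.map ψ = φ)
    (hker : ∀ (X Y : C) (ψ : X ⟶ Y), G.map ψ = 0 ↔ factorsThroughAdd (τ.obj T) ψ)
    (hfg : ∀ X : C, Module.Finite (End (op T)) (G.obj X))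
    (hdense : ∀ Y : ModuleCat.{v} (End (op T)), Module.Finite (End (op T)) Y →
      ∃ X : C, Nonempty (G.obj X ≅ Y))
    -- the AR-triangle `A → B → C₀ → A[1]` ending at the indecomposable `C₀`
    (A B C₀ : C) (a : A ⟶ B) (b : B ⟶ C₀) (c : C₀ ⟶ A⟦(1 : ℤ)⟧)
    (htri : Triangle.mk a b c ∈ distTriang C)
    (hindA : IndecC A) (hindC : IndecC C₀)
    (hAτ : Nonempty (A ≅ τ.obj C₀))
    (hnonsplit : ¬ ∃ s : C₀ ⟶ B, s ≫ b = 𝟙 C₀)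
    (hras : ∀ (Y : C) (g : Y ⟶ C₀), (¬ ∃ s : C₀ ⟶ Y, s ≫ g = 𝟙 C₀) →
      ∃ u : Y ⟶ B, u ≫ b = g)
    (hlas : ∀ (Y : C) (g : A ⟶ Y), (¬ ∃ s : Y ⟶ A, g ≫ s = 𝟙 A) →
      ∃ u : B ⟶ Y, a ≫ u = g)
    -- `G(C₀)` corresponds to a non-projective indecomposable `Γ`-module
    (hC₀ : ¬ memAddC (τ.obj T) C₀) (hnp : ¬ memAddC T C₀) :
    Function.Injective (G.map a) ∧
    Function.Surjective (G.map b) ∧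
    LinearMap.range (G.map a).hom = LinearMap.ker (G.map b).hom ∧
    (¬ ∃ s : G.obj C₀ ⟶ G.obj B, s ≫ G.map b = 𝟙 (G.obj C₀)) ∧
    (∀ (Y : ModuleCat.{v} (End (op T))), Module.Finite (End (op T)) Y →
      ∀ g : Y ⟶ G.obj C₀, (¬ ∃ s : G.obj C₀ ⟶ Y, s ≫ g = 𝟙 (G.obj C₀)) →
        ∃ u : Y ⟶ G.obj B, u ≫ G.map b = g) ∧
    (∀ (Y : ModuleCat.{v} (End (op T))), Module.Finite (End (op T)) Y →
      ∀ g : G.obj A ⟶ Y, (¬ ∃ s : Y ⟶ G.obj A, g ≫ s = 𝟙 (G.obj A)) →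
        ∃ u : G.obj B ⟶ Y, G.map a ≫ u = g) := by
  subst hG
  set G := preadditiveCoyonedaObjOld (op T) with hGdef
  have hab : a ≫ b = 0 := comp_distTriang_mor_zero₁₂ _ htri
  have hbc : b ≫ c = 0 := comp_distTriang_mor_zero₂₃ _ htri
  -- any map `T⟦1⟧ ⟶ C₀` composes to zero with `c`
  have key : ∀ h : (T⟦(1 : ℤ)⟧ : C) ⟶ C₀, h ≫ c = 0 := by
    intro h
    set h' : τ.obj T ⟶ C₀ := hτiso.hom.app T ≫ h with hh'
    have hns : ¬ ∃ s : C₀ ⟶ τ.obj T, s ≫ h' = 𝟙 C₀ := by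
      rintro ⟨s, hs⟩
      exact hC₀ (memAddC_self_of_retract s h' hs)
    obtain ⟨u, hu⟩ := hras _ h' hns
    have h'c : h' ≫ c = 0 := by rw [← hu, Category.assoc, hbc, comp_zero]
    have hrw : h = hτiso.inv.app T ≫ h' := by
      rw [hh', ← Category.assoc, Iso.inv_hom_id_app, Category.id_comp]
    rw [hrw, Category.assoc, h'c, comp_zero]
  -- `G.map` is postcomposition
  have hmap : ∀ (X Y : C) (ψ : X ⟶ Y) (f : T ⟶ X),
      (G.map ψ) (show ((G.obj X : ModuleCat (End (op T))) : Type v) from f) = f ≫ ψ :=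
    fun X Y ψ f => rfl
  -- injectivity at the level of morphisms
  have hinj0 : ∀ f : T ⟶ A, f ≫ a = 0 → f = 0 := by
    intro f hf
    have hf1 : f⟦(1 : ℤ)⟧' ≫ a⟦(1 : ℤ)⟧' = 0 := by
      rw [← Functor.map_comp, hf, Functor.map_zero]
    obtain ⟨g, hg⟩ := Triangle.coyoneda_exact₁ _ htri (f⟦(1 : ℤ)⟧') hf1
    have hz : f⟦(1 : ℤ)⟧' = 0 := hg.trans (key g)
    apply (shiftFunctor C (1 : ℤ)).map_injective
    rw [hz, Functor.map_zero]
  refine ⟨?_, ?_, ?_, ?_, ?_, ?_⟩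
  · -- injective
    intro x y hxy
    have hsub : ((show T ⟶ A from x) - (show T ⟶ A from y)) ≫ a = 0 := by
      rw [Preadditive.sub_comp]; exact sub_eq_zero.mpr hxy
    exact sub_eq_zero.mp (hinj0 _ hsub)
  · -- surjective
    intro f
    set f' : T ⟶ C₀ := f with hf'
    have hns : ¬ ∃ s : C₀ ⟶ T, s ≫ f' = 𝟙 C₀ := by
      rintro ⟨s, hs⟩
      exact hnp (memAddC_self_of_retract s f' hs)
    obtain ⟨u, hu⟩ := hras _ f' hns
    exact ⟨u, by rw [hmap _ _ b u, hu]⟩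
  · -- exactness at `G.obj B`
    ext f
    constructor
    · rintro ⟨g, rfl⟩
      show (G.map b) ((G.map a) g) = 0
      rw [hmap _ _ a g, hmap _ _ b]
      exact (Category.assoc (show T ⟶ A from g) a b).trans (by rw [hab]; exact comp_zero)
    · intro hf
      have hf2 : (show T ⟶ B from f) ≫ b = 0 := by rw [← hmap _ _ b f]; exact hf
      obtain ⟨g, hg⟩ := Triangle.coyoneda_exact₂ _ htri (show T ⟶ B from f) hf2
      exact ⟨g, by rw [hmap _ _ a g]; exact hg.symm⟩
  · -- the sequence does not split
    rintro ⟨s, hs⟩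
    obtain ⟨ψ, hψ⟩ := hfull _ _ s
    have : G.Additive := by
      refine ⟨fun {X Y f g} => ?_⟩
      ext x; rw [ModuleCat.hom_add, LinearMap.add_apply]; exact Preadditive.comp_add _ _ _ _ _ _
    have h0 : G.map (ψ ≫ b - 𝟙 C₀) = 0 := by
      rw [Functor.map_sub, Functor.map_comp, hψ, hs, CategoryTheory.Functor.map_id, sub_self]
    obtain ⟨Z, hZ, g, h, hgh⟩ := (hker _ _ _).mp h0
    have hns : ¬ ∃ s' : C₀ ⟶ Z, s' ≫ h = 𝟙 C₀ := by
      rintro ⟨s', hs'⟩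
      exact hC₀ (memAddC_of_summand s' h hs' hZ)
    obtain ⟨u, hu⟩ := hras _ h hns
    refine hnonsplit ⟨ψ - g ≫ u, ?_⟩
    rw [Preadditive.sub_comp, Category.assoc, hu, hgh]
    abel
  · -- right almost split
    intro Y hYfin g hg
    obtain ⟨X, ⟨e⟩⟩ := hdense Y hYfin
    obtain ⟨ψ, hψ⟩ := hfull _ _ (e.hom ≫ g)
    have hns : ¬ ∃ s : C₀ ⟶ X, s ≫ ψ = 𝟙 C₀ := by
      rintro ⟨s, hs⟩
      refine hg ⟨G.map s ≫ e.hom, ?_⟩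
      rw [Category.assoc, ← hψ, ← Functor.map_comp, hs, CategoryTheory.Functor.map_id]
    obtain ⟨u, hu⟩ := hras _ ψ hns
    refine ⟨e.inv ≫ G.map u, ?_⟩
    rw [Category.assoc, ← Functor.map_comp, hu, hψ, ← Category.assoc, e.inv_hom_id,
      Category.id_comp]
  · -- left almost split
    intro Y hYfin g hg
    obtain ⟨X, ⟨e⟩⟩ := hdense Y hYfin
    obtain ⟨ψ, hψ⟩ := hfull _ _ (g ≫ e.inv)
    have hns : ¬ ∃ s : X ⟶ A, ψ ≫ s = 𝟙 A := by
      rintro ⟨s, hs⟩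
      refine hg ⟨e.inv ≫ G.map s, ?_⟩
      rw [← Category.assoc, ← hψ, ← Functor.map_comp, hs, CategoryTheory.Functor.map_id]
    obtain ⟨u, hu⟩ := hlas _ ψ hns
    refine ⟨G.map u ≫ e.hom, ?_⟩
    rw [← Category.assoc, ← Functor.map_comp, hu, hψ, Category.assoc, e.inv_hom_id,
      Category.comp_id]
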